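/- Fix e > 1 and a convex preorder ≽ on Φ_+. Let τ be a skew shape, ξ_1 a minimal SE-removable ribbon in τ, and ξ_2 a minimal SE-removable ribbon in τ∖ξ_1. Then cont(ξ_2) ≽ cont(ξ_1). -/

import Mathlib

open Finset

abbrev Node : Type := ℤ × ℤ

/-- `v` is weakly southeast of `u` (product order). -/
def SE (u v : Node) : Prop := u.1 ≤ v.1 ∧ u.2 ≤ v.2

/-- `v` is weakly northeast of `u` (`u ↗ v`). -/
def NEr (u v : Node) : Prop := v.1 ≤ u.1 ∧ u.2 ≤ v.2

/-- `v` is strictly northeast of `u` (`u ⇗ v`). -/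
def SNE (u v : Node) : Prop := v.1 < u.1 ∧ u.2 < v.2

def IsSkew (τ : Finset Node) : Prop :=
  ∀ u ∈ τ, ∀ w ∈ τ, ∀ v : Node, SE u v → SE v w → v ∈ τ

def Adj (u v : Node) : Prop :=
  v = u + (1, 0) ∨ v = u + (-1, 0) ∨ v = u + (0, 1) ∨ v = u + (0, -1)

def PathIn (τ : Finset Node) (u v : Node) : Prop :=
  Relation.ReflTransGen (fun a b => a ∈ τ ∧ b ∈ τ ∧ Adj a b) u v

def IsConnectedShape (τ : Finset Node) : Prop :=
  ∀ u ∈ τ, ∀ v ∈ τ, PathIn τ u v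

def Cornered (τ : Finset Node) : Prop :=
  (∀ u ∈ τ, ∀ u' ∈ τ, (u + (1, 0) ∉ τ ∧ u + (0, -1) ∉ τ) →
      (u' + (1, 0) ∉ τ ∧ u' + (0, -1) ∉ τ) → u = u') ∧
  (∀ v ∈ τ, ∀ v' ∈ τ, (v + (-1, 0) ∉ τ ∧ v + (0, 1) ∉ τ) →
      (v' + (-1, 0) ∉ τ ∧ v' + (0, 1) ∉ τ) → v = v')

def DiagConvex (τ : Finset Node) : Prop :=
  ∀ u ∈ τ, ∀ w ∈ τ, ∀ v : Node,
    u.2 - u.1 = v.2 - v.1 → v.2 - v.1 = w.2 - w.1 → SE u v → SE v w → v ∈ τ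

def Thin (τ : Finset Node) : Prop :=
  ∀ u ∈ τ, ∀ v ∈ τ, u.2 - u.1 = v.2 - v.1 → u = v

def IsRibbon (ξ : Finset Node) : Prop :=
  ξ.Nonempty ∧ IsSkew ξ ∧ IsConnectedShape ξ ∧ Thin ξ

def MaxSW (τ : Finset Node) (u : Node) : Prop :=
  u ∈ τ ∧ ∀ v ∈ τ, NEr v u → v = u

def MaxNE (τ : Finset Node) (v : Node) : Prop :=
  v ∈ τ ∧ ∀ w ∈ τ, NEr v w → w = v

def IsNEPath (z : ℕ → Node) (k : ℕ) : Prop :=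
  ∀ i, i + 1 < k → z (i + 1) = z i + (-1, 0) ∨ z (i + 1) = z i + (0, 1)

def IsSEPath (z : ℕ → Node) (k : ℕ) : Prop :=
  ∀ i, i + 1 < k → z (i + 1) = z i + (1, 0) ∨ z (i + 1) = z i + (0, 1)

def SERemovable (τ μ : Finset Node) : Prop :=
  μ ⊆ τ ∧ ∀ u ∈ μ, ∀ v ∈ τ \ μ, ¬ SE u v

/-- Residue of a node, in `ZMod e`. -/
def res (e : ℕ) (u : Node) : ZMod e := ((u.2 - u.1 : ℤ) : ZMod e)

/-- Content of a finite set of nodes, as an element of the free module on `ZMod e`. -/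
def cont (e : ℕ) (τ : Finset Node) : ZMod e → ℤ :=
  fun i => ((τ.filter (fun u => res e u = i)).card : ℤ)

/-- `α(t,h) = α_t + α_{t+1} + ⋯ + α_{t+h-1}` (indices mod `e`). -/
def alphaR (e : ℕ) (t : ZMod e) (h : ℕ) : ZMod e → ℤ :=
  fun i => (((Finset.range h).filter (fun j : ℕ => t + ((j : ℕ) : ZMod e) = i)).card : ℤ)

def IsPosRoot (e : ℕ) (β : ZMod e → ℤ) : Prop :=
  ∃ t : ZMod e, ∃ h : ℕ, 1 ≤ h ∧ β = alphaR e t h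

/-- The null root `δ = α_0 + ⋯ + α_{e-1}`. -/
def deltaR (e : ℕ) : ZMod e → ℤ := fun _ => 1

/-- Imaginary elements: positive multiples of `δ`. -/
def IsImag (e : ℕ) (β : ZMod e → ℤ) : Prop :=
  ∃ m : ℕ, 1 ≤ m ∧ β = fun _ => (m : ℤ)

/-- Indivisible positive roots `Ψ`: real positive roots together with `δ`. -/
def IsIndiv (e : ℕ) (β : ZMod e → ℤ) : Prop :=
  (∃ t : ZMod e, ∃ h : ℕ, 1 ≤ h ∧ ¬ (e ∣ h) ∧ β = alphaR e t h) ∨ β = deltaR e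

/-- A convex preorder on the positive roots. -/
def ConvexPreorder (e : ℕ) (R : (ZMod e → ℤ) → (ZMod e → ℤ) → Prop) : Prop :=
  (∀ β, IsPosRoot e β → R β β) ∧
  (∀ β γ ν, IsPosRoot e β → IsPosRoot e γ → IsPosRoot e ν →
      R β γ → R γ ν → R β ν) ∧
  (∀ β γ, IsPosRoot e β → IsPosRoot e γ → (R β γ ∨ R γ β)) ∧
  (∀ β γ, IsPosRoot e β → IsPosRoot e γ → R β γ → IsPosRoot e (β + γ) →
      R β (β + γ) ∧ R (β + γ) γ) ∧
  (∀ β γ, IsPosRoot e β → IsPosRoot e γ →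
      ((R β γ ∧ R γ β) ↔ (β = γ ∨ (IsImag e β ∧ IsImag e γ))))

/-- `β ≻ γ`. -/
def StrictR (e : ℕ) (R : (ZMod e → ℤ) → (ZMod e → ℤ) → Prop)
    (β γ : ZMod e → ℤ) : Prop := R β γ ∧ ¬ R γ β

/-- `θ` is a sum of positive roots strictly smaller than `β`. -/
def SumRootsLt (e : ℕ) (R : (ZMod e → ℤ) → (ZMod e → ℤ) → Prop)
    (β θ : ZMod e → ℤ) : Prop :=
  ∃ k : ℕ, ∃ γ : Fin k → (ZMod e → ℤ),
    (∀ i, IsPosRoot e (γ i) ∧ StrictR e R β (γ i)) ∧ θ = ∑ i, γ i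

/-- `θ` is a sum of positive roots strictly greater than `β`. -/
def SumRootsGt (e : ℕ) (R : (ZMod e → ℤ) → (ZMod e → ℤ) → Prop)
    (β θ : ZMod e → ℤ) : Prop :=
  ∃ k : ℕ, ∃ γ : Fin k → (ZMod e → ℤ),
    (∀ i, IsPosRoot e (γ i) ∧ StrictR e R (γ i) β) ∧ θ = ∑ i, γ i

/-- A two-tile tableau `(λ1, λ2)` for `τ`. -/
def IsTableau2 (τ lam1 lam2 : Finset Node) : Prop :=
  IsSkew lam1 ∧ IsSkew lam2 ∧ Disjoint lam1 lam2 ∧ lam1 ∪ lam2 = τ ∧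
  ∀ u ∈ lam2, ∀ v ∈ lam1, ¬ SE u v

/-- A cuspidal skew shape (with respect to the preorder `R`). -/
def IsCuspidal (e : ℕ) (R : (ZMod e → ℤ) → (ZMod e → ℤ) → Prop)
    (τ : Finset Node) : Prop :=
  IsPosRoot e (cont e τ) ∧
  ∀ lam1 lam2 : Finset Node, IsTableau2 τ lam1 lam2 →
    SumRootsLt e R (cont e τ) (cont e lam1) ∧
    SumRootsGt e R (cont e τ) (cont e lam2)

/-- An SE-removable ribbon in `τ`. -/
def SERemRibbon (τ ξ : Finset Node) : Prop := IsRibbon ξ ∧ SERemovable τ ξ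

/-- A minimal SE-removable ribbon in `τ`. -/
def MinSERem (e : ℕ) (R : (ZMod e → ℤ) → (ZMod e → ℤ) → Prop)
    (τ ξ : Finset Node) : Prop :=
  SERemRibbon τ ξ ∧ ∀ ν, SERemRibbon τ ν → R (cont e ν) (cont e ξ)

section Aux

lemma se_rfl (u : Node) : SE u u := ⟨le_refl _, le_refl _⟩

lemma se_trans {u v w : Node} (h : SE u v) (h' : SE v w) : SE u w :=
  ⟨h.1.trans h'.1, h.2.trans h'.2⟩

lemma se_antisymm {u v : Node} (h : SE u v) (h' : SE v u) : u = v :=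
  Prod.ext (le_antisymm h.1 h'.1) (le_antisymm h.2 h'.2)

lemma se_total_diag {u v : Node} (h : u.2 - u.1 = v.2 - v.1) : SE u v ∨ SE v u := by
  unfold SE; omega

lemma exists_mx' {τ : Finset Node} {d : ℤ} (h : ∃ u ∈ τ, u.2 - u.1 = d) :
    ∃ w, (w ∈ τ ∧ w.2 - w.1 = d) ∧ ∀ v ∈ τ, v.2 - v.1 = d → SE v w := by
  classical
  obtain ⟨u, hu, hud⟩ := h
  obtain ⟨w, hw, hmax⟩ := (τ.filter (fun v => v.2 - v.1 = d)).exists_max_image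
    (fun v => v.1) ⟨u, by simp [hu, hud]⟩
  simp only [Finset.mem_filter] at hw hmax
  refine ⟨w, ⟨hw.1, hw.2⟩, fun v hv hvd => ⟨hmax v ⟨hv, hvd⟩, ?_⟩⟩
  have := hmax v ⟨hv, hvd⟩
  have h2 := hw.2
  omega

open Classical in
noncomputable def mx (τ : Finset Node) (d : ℤ) : Node :=
  if h : ∃ w, (w ∈ τ ∧ w.2 - w.1 = d) ∧ ∀ v ∈ τ, v.2 - v.1 = d → SE v w then h.choose
  else (0, 0)

lemma mx_spec {τ : Finset Node} {d : ℤ} (h : ∃ u ∈ τ, u.2 - u.1 = d) :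
    (mx τ d ∈ τ ∧ (mx τ d).2 - (mx τ d).1 = d) ∧
      ∀ v ∈ τ, v.2 - v.1 = d → SE v (mx τ d) := by
  have h' := exists_mx' h
  rw [mx]
  split
  · exact (Exists.choose_spec ‹_›)
  · exact absurd h' ‹_›

lemma eq_mx {τ : Finset Node} {w : Node} (hw : w ∈ τ)
    (hmax : ∀ v ∈ τ, v.2 - v.1 = w.2 - w.1 → SE v w) : mx τ (w.2 - w.1) = w := by
  have h : ∃ u ∈ τ, u.2 - u.1 = w.2 - w.1 := ⟨w, hw, rfl⟩
  obtain ⟨⟨hm, hd⟩, hmx⟩ := mx_spec h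
  exact se_antisymm (hmax _ hm hd) (hmx w hw rfl)

lemma mx_step {τ : Finset Node} (hτ : IsSkew τ) {d : ℤ}
    (hd : ∃ u ∈ τ, u.2 - u.1 = d) (hd1 : ∃ u ∈ τ, u.2 - u.1 = d + 1) :
    (mx τ (d+1)).1 = (mx τ d).1 - 1 ∨ (mx τ (d+1)).1 = (mx τ d).1 := by
  obtain ⟨⟨hm, hmd⟩, hmax⟩ := mx_spec hd
  obtain ⟨⟨hm', hmd'⟩, hmax'⟩ := mx_spec hd1
  set m := mx τ d with hmdef
  set m' := mx τ (d+1) with hmdef'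
  by_contra hcon
  push_neg at hcon
  rcases lt_or_ge m.1 m'.1 with hx | hx
  · have hv : ((m'.1, m'.2 - 1) : Node) ∈ τ :=
      hτ m hm m' hm' _ ⟨by omega, by omega⟩ ⟨by omega, by omega⟩
    have := hmax _ hv (by simp; omega)
    have h1 := this.1
    simp at h1
    omega
  · have hx2 : m'.1 ≤ m.1 - 2 := by omega
    have hv : ((m.1 - 1, m.2) : Node) ∈ τ :=
      hτ m' hm' m hm _ ⟨by omega, by omega⟩ ⟨by omega, by omega⟩
    have := hmax' _ hv (by simp; omega)
    have h1 := this.1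
    simp at h1
    omega

end Aux
section Aux2

lemma mx_x_anti {τ : Finset Node} (hτ : IsSkew τ) {d c : ℤ} (hdc : d ≤ c)
    (hocc : ∀ g, d ≤ g → g ≤ c → ∃ u ∈ τ, u.2 - u.1 = g) :
    (mx τ c).1 ≤ (mx τ d).1 := by
  suffices h : ∀ g, d ≤ g → g ≤ c → (mx τ g).1 ≤ (mx τ d).1 from h c hdc le_rfl
  intro g hg
  refine Int.le_induction (motive := fun g _ => g ≤ c → (mx τ g).1 ≤ (mx τ d).1) ?_ ?_ g hg
  · intro _; exact le_rfl
  · intro n hn ih hc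
    have h1 := mx_step hτ (hocc n hn (by omega)) (hocc (n+1) (by omega) (by omega))
    have h2 := ih (by omega)
    omega

lemma mx_y_mono {τ : Finset Node} (hτ : IsSkew τ) {d c : ℤ} (hdc : d ≤ c)
    (hocc : ∀ g, d ≤ g → g ≤ c → ∃ u ∈ τ, u.2 - u.1 = g) :
    (mx τ d).2 ≤ (mx τ c).2 := by
  suffices h : ∀ g, d ≤ g → g ≤ c → (mx τ d).2 ≤ (mx τ g).2 from h c hdc le_rfl
  intro g hg
  refine Int.le_induction (motive := fun g _ => g ≤ c → (mx τ d).2 ≤ (mx τ g).2) ?_ ?_ g hg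
  · intro _; exact le_rfl
  · intro n hn ih hc
    have h1 := mx_step hτ (hocc n hn (by omega)) (hocc (n+1) (by omega) (by omega))
    have h2 := ih (by omega)
    have hd1 := (mx_spec (hocc n hn (by omega))).1.2
    have hd2 := (mx_spec (hocc (n+1) (by omega) (by omega))).1.2
    omega

lemma mx_runV {τ : Finset Node} (hτ : IsSkew τ) {d c : ℤ} (_hdc : d ≤ c)
    (hocc : ∀ g, d ≤ g → g ≤ c → ∃ u ∈ τ, u.2 - u.1 = g)
    (hx : (mx τ d).1 ≤ (mx τ c).1) :
    ∀ g, d ≤ g → g ≤ c → mx τ g = ((mx τ d).1, (mx τ d).1 + g) := by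
  intro g hg hgc
  have h1 : (mx τ g).1 ≤ (mx τ d).1 :=
    mx_x_anti hτ hg (fun g' h h' => hocc g' h (by omega))
  have h2 : (mx τ c).1 ≤ (mx τ g).1 :=
    mx_x_anti hτ hgc (fun g' h h' => hocc g' (by omega) h')
  have hdg := (mx_spec (hocc g hg hgc)).1.2
  have hx1 : (mx τ g).1 = (mx τ d).1 := by omega
  exact Prod.ext hx1 (by omega)

lemma mx_runH {τ : Finset Node} (hτ : IsSkew τ) {d c : ℤ} (_hcd : c ≤ d)
    (hocc : ∀ g, c ≤ g → g ≤ d → ∃ u ∈ τ, u.2 - u.1 = g)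
    (hy : (mx τ d).2 ≤ (mx τ c).2) :
    ∀ g, c ≤ g → g ≤ d → mx τ g = ((mx τ d).2 - g, (mx τ d).2) := by
  intro g hg hgd
  have h1 : (mx τ g).2 ≤ (mx τ d).2 :=
    mx_y_mono hτ hgd (fun g' h h' => hocc g' (by omega) h')
  have h2 : (mx τ c).2 ≤ (mx τ g).2 :=
    mx_y_mono hτ hg (fun g' h h' => hocc g' h (by omega))
  have hdg := (mx_spec (hocc g hg hgd)).1.2
  have hy1 : (mx τ g).2 = (mx τ d).2 := by omega
  exact Prod.ext (by omega) hy1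

lemma occ_between {τ : Finset Node} (hτ : IsSkew τ) {u v : Node}
    (hu : u ∈ τ) (hv : v ∈ τ) (hse : SE u v) {g : ℤ}
    (h1 : min (u.2 - u.1) (v.2 - v.1) ≤ g) (h2 : g ≤ max (u.2 - u.1) (v.2 - v.1)) :
    ∃ w ∈ τ, w.2 - w.1 = g ∧ SE u w ∧ SE w v := by
  obtain ⟨hx, hy⟩ := hse
  rcases le_or_gt (u.2 - u.1) g with hg | hg
  · refine ⟨(u.1, u.2 + (g - (u.2 - u.1))), hτ u hu v hv _ ⟨le_rfl, by omega⟩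
      ⟨hx, by simp; omega⟩, by simp; omega, ⟨le_rfl, by omega⟩, ⟨hx, by simp; omega⟩⟩
  · refine ⟨(u.1 + ((u.2 - u.1) - g), u.2), hτ u hu v hv _ ⟨by omega, le_rfl⟩
      ⟨by simp; omega, hy⟩, by simp; omega, ⟨by omega, le_rfl⟩, ⟨by simp; omega, hy⟩⟩

end Aux2
section Aux3

lemma adj_symm {a b : Node} (h : Adj a b) : Adj b a := by
  unfold Adj at *
  rcases h with h | h | h | h
  · exact Or.inr (Or.inl (by simp [Prod.ext_iff] at *; omega))
  · exact Or.inl (by simp [Prod.ext_iff] at *; omega)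
  · exact Or.inr (Or.inr (Or.inr (by simp [Prod.ext_iff] at *; omega)))
  · exact Or.inr (Or.inr (Or.inl (by simp [Prod.ext_iff] at *; omega)))

lemma pathIn_symm {σ : Finset Node} {u v : Node} (h : PathIn σ u v) : PathIn σ v u := by
  have hs : Symmetric (fun a b => a ∈ σ ∧ b ∈ σ ∧ Adj a b) := by
    intro a b ⟨h1, h2, h3⟩
    exact ⟨h2, h1, adj_symm h3⟩
  exact (haveI : Std.Symm (fun a b : Node => a ∈ σ ∧ b ∈ σ ∧ Adj a b) := ⟨fun a b h => hs h⟩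
    Std.Symm.symm (r := Relation.ReflTransGen (fun a b : Node => a ∈ σ ∧ b ∈ σ ∧ Adj a b)) _ _ h)

lemma mem_rho {τ : Finset Node} {s t : ℤ} {w : Node} :
    w ∈ (Finset.Icc s t).image (mx τ) ↔ ∃ g, (s ≤ g ∧ g ≤ t) ∧ mx τ g = w := by
  simp [Finset.mem_image, Finset.mem_Icc]

lemma removable_of {τ : Finset Node} (hτ : IsSkew τ) {s t : ℤ} (hst : s ≤ t)
    (hocc : ∀ g, s ≤ g → g ≤ t → ∃ u ∈ τ, u.2 - u.1 = g)
    (hT : ((mx τ t).1, (mx τ t).2 + 1) ∉ τ)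
    (hB : ((mx τ s).1 + 1, (mx τ s).2) ∉ τ) :
    SERemovable τ ((Finset.Icc s t).image (mx τ)) := by
  constructor
  · intro w hw
    obtain ⟨g, hg, rfl⟩ := mem_rho.mp hw
    exact (mx_spec (hocc g hg.1 hg.2)).1.1
  · intro u hu v hv hse
    obtain ⟨d, hd, rfl⟩ := mem_rho.mp hu
    rw [Finset.mem_sdiff] at hv
    obtain ⟨hvτ, hvρ⟩ := hv
    have hoccc : ∃ u ∈ τ, u.2 - u.1 = v.2 - v.1 := ⟨v, hvτ, rfl⟩
    obtain ⟨⟨hmc, hmcd⟩, hmaxc⟩ := mx_spec hoccc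
    set c := v.2 - v.1 with hc
    have hsev : SE v (mx τ c) := hmaxc v hvτ rfl
    have hsem : SE (mx τ d) (mx τ c) := se_trans hse hsev
    have hdd := (mx_spec (hocc d hd.1 hd.2)).1.2
    have hdm := (mx_spec (hocc d hd.1 hd.2)).1.1
    rcases lt_or_ge t c with hct | hct
    · -- c > t : vertical run up to c
      have hocc2 : ∀ g, d ≤ g → g ≤ c → ∃ u ∈ τ, u.2 - u.1 = g := by
        intro g hg1 hg2
        obtain ⟨w, hw, hwd, -, -⟩ := occ_between (g := g) hτ hdm hmc hsem
          (by rw [hdd, hmcd]; omega) (by rw [hdd, hmcd]; omega)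
        exact ⟨w, hw, hwd⟩
      have hrun := mx_runV hτ (by omega : d ≤ c) hocc2 hsem.1
      have e1 := hrun t (by omega) (by omega)
      have e2 := hrun (t+1) (by omega) (by omega)
      exact hT (by
        have : ((mx τ t).1, (mx τ t).2 + 1) = mx τ (t+1) := by
          rw [e1, e2]; simp; ring
        rw [this]
        exact (mx_spec (hocc2 (t+1) (by omega) (by omega))).1.1)
    · rcases lt_or_ge c s with hcs | hcs
      · -- c < s : horizontal run down to c
        have hocc2 : ∀ g, c ≤ g → g ≤ d → ∃ u ∈ τ, u.2 - u.1 = g := by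
          intro g hg1 hg2
          obtain ⟨w, hw, hwd, -, -⟩ := occ_between (g := g) hτ hdm hmc hsem
            (by rw [hdd, hmcd]; omega) (by rw [hdd, hmcd]; omega)
          exact ⟨w, hw, hwd⟩
        have hrun := mx_runH hτ (by omega : c ≤ d) hocc2 hsem.2
        have e1 := hrun s (by omega) (by omega)
        have e2 := hrun (s-1) (by omega) (by omega)
        exact hB (by
          have : ((mx τ s).1 + 1, (mx τ s).2) = mx τ (s-1) := by
            rw [e1, e2]; simp; ring
          rw [this]
          exact (mx_spec (hocc2 (s-1) (by omega) (by omega))).1.1)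
      · -- s ≤ c ≤ t : v = mx τ c ∈ ρ, contradiction
        exfalso
        apply hvρ
        rcases le_or_gt d c with hdc | hdc
        · have h1 : (mx τ c).1 ≤ (mx τ d).1 :=
            mx_x_anti hτ hdc (fun g h h' => hocc g (by omega) (by omega))
          have hv1 : v.1 = (mx τ c).1 := by
            have := hse.1; have := hsev.1; omega
          have hveq : v = mx τ c := Prod.ext hv1 (by omega)
          rw [hveq]
          exact mem_rho.mpr ⟨c, ⟨hcs, hct⟩, rfl⟩
        · have h1 : (mx τ d).2 ≤ (mx τ c).2 := hsem.2
          have h2 : (mx τ c).2 ≤ (mx τ d).2 :=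
            mx_y_mono hτ (by omega) (fun g h h' => hocc g (by omega) (by omega))
          have hv2 : v.2 = (mx τ c).2 := by
            have := hse.2; have := hsev.2; omega
          have hveq : v = mx τ c := Prod.ext (by omega) hv2
          rw [hveq]
          exact mem_rho.mpr ⟨c, ⟨hcs, hct⟩, rfl⟩

lemma ribbon_of {τ : Finset Node} (hτ : IsSkew τ) {s t : ℤ} (hst : s ≤ t)
    (hocc : ∀ g, s ≤ g → g ≤ t → ∃ u ∈ τ, u.2 - u.1 = g) :
    IsRibbon ((Finset.Icc s t).image (mx τ)) := by
  refine ⟨⟨mx τ s, mem_rho.mpr ⟨s, ⟨le_rfl, hst⟩, rfl⟩⟩, ?_, ?_, ?_⟩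
  · -- IsSkew
    intro u hu w hw v hsev hsev'
    obtain ⟨d, hd, rfl⟩ := mem_rho.mp hu
    obtain ⟨c, hc, rfl⟩ := mem_rho.mp hw
    have hse := se_trans hsev hsev'
    have hdd := (mx_spec (hocc d hd.1 hd.2)).1.2
    have hcc := (mx_spec (hocc c hc.1 hc.2)).1.2
    rcases le_or_gt d c with hdc | hdc
    · have hrun := mx_runV hτ hdc (fun g h h' => hocc g (by omega) (by omega)) hse.1
      have e1 := hrun d (le_rfl) hdc
      have e2 := hrun c hdc (le_rfl)
      have hv1 : v.1 = (mx τ d).1 := by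
        have := hsev.1; have := hsev'.1
        rw [e2] at *; simp at *; omega
      have hg : d ≤ v.2 - v.1 ∧ v.2 - v.1 ≤ c := by
        have := hsev.2; have := hsev'.2
        rw [e2] at *; simp at *; omega
      have e3 := hrun (v.2 - v.1) hg.1 hg.2
      refine mem_rho.mpr ⟨v.2 - v.1, ⟨by omega, by omega⟩, ?_⟩
      rw [e3]
      exact Prod.ext (by simp [hv1]) (by simp; omega)
    · have hrun := mx_runH hτ (le_of_lt hdc) (fun g h h' => hocc g (by omega) (by omega)) hse.2
      have e2 := hrun c (le_rfl) (le_of_lt hdc)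
      have hv2 : v.2 = (mx τ d).2 := by
        have := hsev.2; have := hsev'.2
        rw [e2] at *; simp at *; omega
      have hg : c ≤ v.2 - v.1 ∧ v.2 - v.1 ≤ d := by
        have := hsev.1; have := hsev'.1
        rw [e2] at *; simp at *; omega
      have e3 := hrun (v.2 - v.1) hg.1 hg.2
      refine mem_rho.mpr ⟨v.2 - v.1, ⟨by omega, by omega⟩, ?_⟩
      rw [e3]
      exact Prod.ext (by simp; omega) (by simp [hv2])
  · -- connected
    have key : ∀ c, s ≤ c → c ≤ t →
        PathIn ((Finset.Icc s t).image (mx τ)) (mx τ s) (mx τ c) := by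
      intro c hc
      refine Int.le_induction
        (motive := fun c _ => c ≤ t → PathIn ((Finset.Icc s t).image (mx τ)) (mx τ s) (mx τ c))
        ?_ ?_ c hc
      · intro _; exact Relation.ReflTransGen.refl
      · intro n hn ih hnt
        refine Relation.ReflTransGen.tail (ih (by omega)) ?_
        refine ⟨mem_rho.mpr ⟨n, ⟨hn, by omega⟩, rfl⟩,
          mem_rho.mpr ⟨n+1, ⟨by omega, hnt⟩, rfl⟩, ?_⟩
        have h1 := mx_step hτ (hocc n hn (by omega)) (hocc (n+1) (by omega) hnt)
        have hd1 := (mx_spec (hocc n hn (by omega))).1.2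
        have hd2 := (mx_spec (hocc (n+1) (by omega) hnt)).1.2
        rcases h1 with h | h
        · exact Or.inr (Or.inl (by simp [Prod.ext_iff]; omega))
        · exact Or.inr (Or.inr (Or.inl (by simp [Prod.ext_iff]; omega)))
    intro u hu v hv
    obtain ⟨d, hd, rfl⟩ := mem_rho.mp hu
    obtain ⟨c, hc, rfl⟩ := mem_rho.mp hv
    exact Relation.ReflTransGen.trans (pathIn_symm (key d hd.1 hd.2)) (key c hc.1 hc.2)
  · -- thin
    intro u hu v hv hd
    obtain ⟨d, hd1, rfl⟩ := mem_rho.mp hu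
    obtain ⟨c, hc1, rfl⟩ := mem_rho.mp hv
    have h1 := (mx_spec (hocc d hd1.1 hd1.2)).1.2
    have h2 := (mx_spec (hocc c hc1.1 hc1.2)).1.2
    have : d = c := by omega
    rw [this]

lemma image_diag_mx {τ : Finset Node} {s t : ℤ}
    (hocc : ∀ g, s ≤ g → g ≤ t → ∃ u ∈ τ, u.2 - u.1 = g) :
    (((Finset.Icc s t).image (mx τ)).image (fun u => u.2 - u.1)) = Finset.Icc s t := by
  rw [Finset.image_image]
  have : ∀ g ∈ Finset.Icc s t, ((fun u : Node => u.2 - u.1) ∘ mx τ) g = id g := by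
    intro g hg
    rw [Finset.mem_Icc] at hg
    exact (mx_spec (hocc g hg.1 hg.2)).1.2
  rw [Finset.image_congr this, Finset.image_id]

end Aux3
section Aux4

lemma adj_diag {a b : Node} (h : Adj a b) :
    b.2 - b.1 = a.2 - a.1 + 1 ∨ b.2 - b.1 = a.2 - a.1 - 1 := by
  rcases h with h | h | h | h <;> simp [Prod.ext_iff] at h <;> omega

lemma pathIn_diag_between {σ : Finset Node} {u v : Node} (hp : PathIn σ u v) (hv : v ∈ σ) :
    ∀ g, min (u.2 - u.1) (v.2 - v.1) ≤ g → g ≤ max (u.2 - u.1) (v.2 - v.1) →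
      ∃ w ∈ σ, w.2 - w.1 = g := by
  induction hp using Relation.ReflTransGen.head_induction_on with
  | refl => intro g h1 h2; exact ⟨v, hv, by omega⟩
  | head h hp ih =>
    rename_i a b
    intro g h1 h2
    obtain ⟨ha, hb, hadj⟩ := h
    have hd := adj_diag hadj
    by_cases hg : min (b.2 - b.1) (v.2 - v.1) ≤ g ∧ g ≤ max (b.2 - b.1) (v.2 - v.1)
    · exact ih g hg.1 hg.2
    · exact ⟨a, ha, by omega⟩

lemma ribbon_diag_interval {ξ : Finset Node} (hrib : IsRibbon ξ) {u v : Node}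
    (hu : u ∈ ξ) (hv : v ∈ ξ) {g : ℤ} (h1 : u.2 - u.1 ≤ g) (h2 : g ≤ v.2 - v.1) :
    ∃ w ∈ ξ, w.2 - w.1 = g :=
  pathIn_diag_between (hrib.2.2.1 u hu v hv) hv g (by omega) (by omega)

lemma ribbon_mem_eq_mx {ξ : Finset Node} (hthin : Thin ξ) {u : Node} (hu : u ∈ ξ) :
    mx ξ (u.2 - u.1) = u :=
  eq_mx hu (fun v hv hvd => by rw [hthin v hv u hu hvd]; exact se_rfl u)

lemma rem_se {σ ξ : Finset Node} (hrem : SERemovable σ ξ) (hthin : Thin ξ)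
    {u v : Node} (hu : u ∈ ξ) (hv : v ∈ σ) (hd : v.2 - v.1 = u.2 - u.1) : SE v u := by
  rcases se_total_diag hd with h | h
  · exact h
  · by_cases hvξ : v ∈ ξ
    · rw [hthin u hu v hvξ (by omega)]; exact se_rfl v
    · exact absurd h (hrem.2 u hu v (Finset.mem_sdiff.mpr ⟨hv, hvξ⟩))

lemma rem_mx {σ ξ : Finset Node} (hrem : SERemovable σ ξ) (hthin : Thin ξ)
    {u : Node} (hu : u ∈ ξ) : mx σ (u.2 - u.1) = u :=
  eq_mx (hrem.1 hu) (fun v hv hd => rem_se hrem hthin hu hv hd)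

lemma hug {τ ξ1 ξ2 : Finset Node} (hτ : IsSkew τ)
    (hrem1 : SERemovable τ ξ1) (hthin1 : Thin ξ1)
    (hrem2 : SERemovable (τ \ ξ1) ξ2) (hthin2 : Thin ξ2)
    {w1 w2 : Node} (h1 : w1 ∈ ξ1) (h2 : w2 ∈ ξ2) (hd : w1.2 - w1.1 = w2.2 - w2.1) :
    w1 = (w2.1 + 1, w2.2 + 1) := by
  have hw2τ' : w2 ∈ τ \ ξ1 := hrem2.1 h2
  have hw2τ : w2 ∈ τ := (Finset.mem_sdiff.mp hw2τ').1
  have hw2n1 : w2 ∉ ξ1 := (Finset.mem_sdiff.mp hw2τ').2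
  have hse : SE w2 w1 := rem_se hrem1 hthin1 h1 hw2τ (by omega)
  have hne : w2 ≠ w1 := fun h => hw2n1 (h ▸ h1)
  have hk : w2.1 + 1 ≤ w1.1 := by
    rcases eq_or_lt_of_le hse.1 with h | h
    · exfalso; exact hne (Prod.ext h (by omega))
    · omega
  by_contra hne2
  have hk2 : w2.1 + 2 ≤ w1.1 := by
    rcases eq_or_lt_of_le (by omega : w2.1 + 1 ≤ w1.1) with h | h
    · exfalso; exact hne2 (Prod.ext h.symm (by omega))
    · omega
  set w : Node := (w1.1 - 1, w1.2 - 1) with hwdef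
  have hwτ : w ∈ τ :=
    hτ w2 hw2τ w1 (hrem1.1 h1) w ⟨by simp [hwdef]; omega, by simp [hwdef]; omega⟩
      ⟨by simp [hwdef], by simp [hwdef]⟩
  have hwn1 : w ∉ ξ1 := by
    intro hw
    have := hthin1 w hw w1 h1 (by simp [hwdef]; try omega)
    simp [Prod.ext_iff, hwdef] at this; try omega
  have hw2' : w ∈ ξ2 := by
    by_contra hwn2
    exact hrem2.2 w2 h2 w
      (Finset.mem_sdiff.mpr ⟨Finset.mem_sdiff.mpr ⟨hwτ, hwn1⟩, hwn2⟩)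
      ⟨by simp [hwdef]; try omega, by simp [hwdef]; try omega⟩
  have := hthin2 w hw2' w2 h2 (by simp [hwdef]; try omega)
  simp [Prod.ext_iff, hwdef] at this; try omega

lemma cont_apply_eq_card_diag {σ : Finset Node} (hthin : Thin σ) (e : ℕ) (i : ZMod e) :
    cont e σ i =
      (((σ.image (fun u => u.2 - u.1)).filter (fun d : ℤ => (d : ZMod e) = i)).card : ℤ) := by
  classical
  rw [cont]
  congr 1
  rw [Finset.filter_image]
  rw [Finset.card_image_of_injOn]
  · congr 1
  · intro a ha b hb hab
    exact hthin a (Finset.mem_filter.mp ha).1 b (Finset.mem_filter.mp hb).1 hab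

lemma cont_eq_of_diag_image_eq {σ1 σ2 : Finset Node} (h1 : Thin σ1) (h2 : Thin σ2)
    (h : σ1.image (fun u => u.2 - u.1) = σ2.image (fun u => u.2 - u.1)) (e : ℕ) :
    cont e σ1 = cont e σ2 :=
  funext fun i => by
    rw [cont_apply_eq_card_diag h1 e i, cont_apply_eq_card_diag h2 e i, h]

lemma isPosRoot_of_interval {σ : Finset Node} (hthin : Thin σ) {a b : ℤ} (hab : a ≤ b)
    (himg : σ.image (fun u => u.2 - u.1) = Finset.Icc a b) (e : ℕ) :
    IsPosRoot e (cont e σ) := by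
  classical
  refine ⟨(a : ZMod e), (b - a + 1).toNat, by omega, ?_⟩
  funext i
  rw [cont_apply_eq_card_diag hthin e i, himg, alphaR]
  congr 1
  apply Finset.card_bij (fun d _ => (d - a).toNat)
  · intro d hd
    simp only [Finset.mem_filter, Finset.mem_Icc] at hd
    simp only [Finset.mem_filter, Finset.mem_range]
    constructor
    · omega
    · have hcast : (((d - a).toNat : ℕ) : ZMod e) = ((d - a : ℤ) : ZMod e) := by
        rw [← Int.cast_natCast, Int.toNat_of_nonneg (by omega)]
      rw [hcast, ← hd.2]
      push_cast
      ring
  · intro d1 hd1 d2 hd2 heq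
    simp only [Finset.mem_filter, Finset.mem_Icc] at hd1 hd2
    omega
  · intro j hj
    simp only [Finset.mem_filter, Finset.mem_range] at hj
    refine ⟨a + j, ?_, by omega⟩
    simp only [Finset.mem_filter, Finset.mem_Icc]
    refine ⟨⟨by omega, by omega⟩, ?_⟩
    rw [← hj.2]
    push_cast
    ring

end Aux4
theorem stmt16 (e : ℕ) (he : 1 < e)
    (R : (ZMod e → ℤ) → (ZMod e → ℤ) → Prop) (hR : ConvexPreorder e R)
    (τ ξ1 ξ2 : Finset Node) (hτ : IsSkew τ)
    (h1 : MinSERem e R τ ξ1) (h2 : MinSERem e R (τ \ ξ1) ξ2) :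
    R (cont e ξ2) (cont e ξ1) := by
  classical
  obtain ⟨⟨hrib1, hrem1⟩, hmin1⟩ := h1
  obtain ⟨⟨hrib2, hrem2⟩, hmin2⟩ := h2
  have hthin1 := hrib1.2.2.2
  have hthin2 := hrib2.2.2.2
  have hskew1 := hrib1.2.1
  have hne1 := hrib1.1
  have hne2 := hrib2.1
  have hsub2τ : ξ2 ⊆ τ := fun u hu => (Finset.mem_sdiff.mp (hrem2.1 hu)).1
  set D1 := ξ1.image (fun u => u.2 - u.1) with hD1def
  set D2 := ξ2.image (fun u => u.2 - u.1) with hD2def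
  have hD1ne : D1.Nonempty := hne1.image _
  have hD2ne : D2.Nonempty := hne2.image _
  set a1 := D1.min' hD1ne with ha1def
  set b1 := D1.max' hD1ne with hb1def
  set a2 := D2.min' hD2ne with ha2def
  set b2 := D2.max' hD2ne with hb2def
  have hmemD1 : ∀ d ∈ D1, ∃ w ∈ ξ1, w.2 - w.1 = d := by
    intro d hd
    rw [hD1def, Finset.mem_image] at hd
    obtain ⟨w, hw, hwd⟩ := hd
    exact ⟨w, hw, hwd⟩
  have hmemD2 : ∀ d ∈ D2, ∃ w ∈ ξ2, w.2 - w.1 = d := by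
    intro d hd
    rw [hD2def, Finset.mem_image] at hd
    obtain ⟨w, hw, hwd⟩ := hd
    exact ⟨w, hw, hwd⟩
  have hmem1D : ∀ w ∈ ξ1, (w.2 - w.1) ∈ D1 := fun w hw => Finset.mem_image_of_mem _ hw
  have hmem2D : ∀ w ∈ ξ2, (w.2 - w.1) ∈ D2 := fun w hw => Finset.mem_image_of_mem _ hw
  have hbound1 : ∀ w ∈ ξ1, a1 ≤ w.2 - w.1 ∧ w.2 - w.1 ≤ b1 := fun w hw =>
    ⟨Finset.min'_le _ _ (hmem1D w hw), Finset.le_max' _ _ (hmem1D w hw)⟩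
  have hbound2 : ∀ w ∈ ξ2, a2 ≤ w.2 - w.1 ∧ w.2 - w.1 ≤ b2 := fun w hw =>
    ⟨Finset.min'_le _ _ (hmem2D w hw), Finset.le_max' _ _ (hmem2D w hw)⟩
  obtain ⟨p1a, hp1a, hp1ad⟩ := hmemD1 a1 (D1.min'_mem hD1ne)
  obtain ⟨p1b, hp1b, hp1bd⟩ := hmemD1 b1 (D1.max'_mem hD1ne)
  obtain ⟨p2a, hp2a, hp2ad⟩ := hmemD2 a2 (D2.min'_mem hD2ne)
  obtain ⟨p2b, hp2b, hp2bd⟩ := hmemD2 b2 (D2.max'_mem hD2ne)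
  have ha1b1 : a1 ≤ b1 := by have := hbound1 p1a hp1a; omega
  have ha2b2 : a2 ≤ b2 := by have := hbound2 p2a hp2a; omega
  have hint1 : ∀ g, a1 ≤ g → g ≤ b1 → ∃ w ∈ ξ1, w.2 - w.1 = g := fun g h h' =>
    ribbon_diag_interval hrib1 hp1a hp1b (by omega) (by omega)
  have hint2 : ∀ g, a2 ≤ g → g ≤ b2 → ∃ w ∈ ξ2, w.2 - w.1 = g := fun g h h' =>
    ribbon_diag_interval hrib2 hp2a hp2b (by omega) (by omega)
  have hND1 : ∀ g, g ∈ D1 ↔ (a1 ≤ g ∧ g ≤ b1) := by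
    intro g
    constructor
    · intro hg; exact ⟨Finset.min'_le _ _ hg, Finset.le_max' _ _ hg⟩
    · intro hg
      obtain ⟨w, hw, hwd⟩ := hint1 g hg.1 hg.2
      exact hwd ▸ hmem1D w hw
  have hND2 : ∀ g, g ∈ D2 ↔ (a2 ≤ g ∧ g ≤ b2) := by
    intro g
    constructor
    · intro hg; exact ⟨Finset.min'_le _ _ hg, Finset.le_max' _ _ hg⟩
    · intro hg
      obtain ⟨w, hw, hwd⟩ := hint2 g hg.1 hg.2
      exact hwd ▸ hmem2D w hw
  have hmx1 : ∀ w ∈ ξ1, mx τ (w.2 - w.1) = w := fun w hw => rem_mx hrem1 hthin1 hw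
  have hmx2 : ∀ w ∈ ξ2, (w.2 - w.1) ∉ D1 → mx τ (w.2 - w.1) = w := by
    intro w hw hd
    apply eq_mx (hsub2τ hw)
    intro v hv hvd
    have hvn1 : v ∉ ξ1 := fun hv1 => hd (by rw [← hvd]; exact hmem1D v hv1)
    exact rem_se hrem2 hthin2 hw (Finset.mem_sdiff.mpr ⟨hv, hvn1⟩) hvd
  by_cases hov : ∃ d, d ∈ D1 ∧ d ∈ D2
  · -- OVERLAP CASE
    obtain ⟨d0, hd0D1, hd0D2⟩ := hov
    rw [hND1] at hd0D1
    rw [hND2] at hd0D2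
    have hocc : ∀ g, a2 ≤ g → g ≤ b2 → ∃ u ∈ τ, u.2 - u.1 = g := by
      intro g h h'
      obtain ⟨w, hw, hwd⟩ := hint2 g h h'
      exact ⟨w, hsub2τ hw, hwd⟩
    have hT : ((mx τ b2).1, (mx τ b2).2 + 1) ∉ τ := by
      intro hv0
      by_cases hb2D1 : b2 ∈ D1
      · obtain ⟨w1, hw1, hw1d⟩ := hmemD1 b2 hb2D1
        have hmxb2 : mx τ b2 = w1 := by rw [← hw1d]; exact hmx1 w1 hw1
        rw [hmxb2] at hv0
        by_cases hb21D1 : (b2 + 1) ∈ D1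
        · obtain ⟨w1', hw1', hw1d'⟩ := hmemD1 (b2+1) hb21D1
          have hhug : w1 = (p2b.1 + 1, p2b.2 + 1) :=
            hug hτ hrem1 hthin1 hrem2 hthin2 hw1 hp2b (by omega)
          have e1 : mx ξ1 b2 = w1 := by rw [← hw1d]; exact ribbon_mem_eq_mx hthin1 hw1
          have e2 : mx ξ1 (b2+1) = w1' := by rw [← hw1d']; exact ribbon_mem_eq_mx hthin1 hw1'
          have hstep := mx_step hskew1 ⟨w1, hw1, hw1d⟩ ⟨w1', hw1', hw1d'⟩
          rw [e1, e2] at hstep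
          rcases hstep with hh | hh
          · -- horizontal: w1' = (w1.1 - 1, w1.2); v0 dominates w1'
            have hw1'eq : w1' = (w1.1 - 1, w1.2) := Prod.ext hh (by omega)
            have hv0n1 : ((w1.1, w1.2 + 1) : Node) ∉ ξ1 := by
              intro hmem
              have := hthin1 _ hmem w1' hw1' (by rw [hw1'eq]; simp; try omega)
              rw [hw1'eq] at this; simp [Prod.ext_iff] at this; try omega
            exact hrem1.2 w1' hw1' _ (Finset.mem_sdiff.mpr ⟨hv0, hv0n1⟩)
              (by rw [hw1'eq]; exact ⟨by simp; try omega, by simp⟩)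
          · -- vertical: w1' = (w1.1, w1.2 + 1) = v0; use w = (w1.1 - 1, w1.2)
            have hwτ : ((w1.1 - 1, w1.2) : Node) ∈ τ :=
              hτ p2b (hsub2τ hp2b) (w1.1, w1.2 + 1) hv0 _
                ⟨by rw [hhug]; simp, by rw [hhug]; simp⟩ ⟨by simp, by simp⟩
            have hwn1 : ((w1.1 - 1, w1.2) : Node) ∉ ξ1 := by
              intro hmem
              have := hthin1 _ hmem w1' hw1' (by simp; try omega)
              have h2 := hh
              rw [← this] at h2; simp at h2; try omega
            have hwn2 : ((w1.1 - 1, w1.2) : Node) ∉ ξ2 := by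
              intro hmem
              have := (hbound2 _ hmem).2; simp at this; omega
            exact hrem2.2 p2b hp2b _
              (Finset.mem_sdiff.mpr ⟨Finset.mem_sdiff.mpr ⟨hwτ, hwn1⟩, hwn2⟩)
              ⟨by rw [hhug]; simp, by rw [hhug]; simp⟩
        · -- b2+1 ∉ D1
          have hv0n1 : ((w1.1, w1.2 + 1) : Node) ∉ ξ1 := by
            intro hmem
            have hh2 := hmem1D _ hmem
            have he2 : ((w1.1, w1.2 + 1) : Node).2 - ((w1.1, w1.2 + 1) : Node).1 = b2 + 1 := by
              simp; omega
            rw [he2] at hh2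
            exact hb21D1 hh2
          exact hrem1.2 w1 hw1 _ (Finset.mem_sdiff.mpr ⟨hv0, hv0n1⟩) ⟨by simp, by simp⟩
      · -- b2 ∉ D1
        have hmxb2 : mx τ b2 = p2b := by rw [← hp2bd]; exact hmx2 p2b hp2b (by rw [hp2bd]; exact hb2D1)
        rw [hmxb2] at hv0
        have hb2gt : b1 < b2 := by
          by_contra hle
          push_neg at hle
          exact hb2D1 ((hND1 b2).mpr ⟨by omega, hle⟩)
        have hv0n1 : ((p2b.1, p2b.2 + 1) : Node) ∉ ξ1 := by
          intro hmem
          have := (hbound1 _ hmem).2; simp at this; omega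
        have hv0n2 : ((p2b.1, p2b.2 + 1) : Node) ∉ ξ2 := by
          intro hmem
          have := (hbound2 _ hmem).2; simp at this; omega
        exact hrem2.2 p2b hp2b _
          (Finset.mem_sdiff.mpr ⟨Finset.mem_sdiff.mpr ⟨hv0, hv0n1⟩, hv0n2⟩)
          ⟨by simp, by simp⟩
    have hB : ((mx τ a2).1 + 1, (mx τ a2).2) ∉ τ := by
      intro hv0
      by_cases ha2D1 : a2 ∈ D1
      · obtain ⟨w1, hw1, hw1d⟩ := hmemD1 a2 ha2D1
        have hmxa2 : mx τ a2 = w1 := by rw [← hw1d]; exact hmx1 w1 hw1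
        rw [hmxa2] at hv0
        by_cases ha21D1 : (a2 - 1) ∈ D1
        · obtain ⟨w1', hw1', hw1d'⟩ := hmemD1 (a2-1) ha21D1
          have hhug : w1 = (p2a.1 + 1, p2a.2 + 1) :=
            hug hτ hrem1 hthin1 hrem2 hthin2 hw1 hp2a (by omega)
          have e1 : mx ξ1 a2 = w1 := by rw [← hw1d]; exact ribbon_mem_eq_mx hthin1 hw1
          have e2 : mx ξ1 (a2-1) = w1' := by rw [← hw1d']; exact ribbon_mem_eq_mx hthin1 hw1'
          have hstep := mx_step hskew1 (d := a2 - 1) ⟨w1', hw1', hw1d'⟩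
            ⟨w1, hw1, by omega⟩
          rw [e2, (by ring_nf : a2 - 1 + 1 = a2), e1] at hstep
          rcases hstep with hh | hh
          · -- w1.1 = w1'.1 - 1 : vertical step upward; w1' = (w1.1 + 1, w1.2 - ...)?
            -- w1'.1 = w1.1 + 1, diag a2-1 so w1'.2 = w1.1 + 1 + a2 - 1 = w1.1 + a2 = w1.2
            have hw1'eq : w1' = (w1.1 + 1, w1.2) := Prod.ext (by omega) (by omega)
            -- v0 = (w1.1+1, w1.2) = w1' ∈ ξ1 ; use w = (w1.1, w1.2 - 1)
            have hwτ : ((w1.1, w1.2 - 1) : Node) ∈ τ :=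
              hτ p2a (hsub2τ hp2a) (w1.1 + 1, w1.2) hv0 _
                ⟨by rw [hhug]; simp, by rw [hhug]; simp⟩ ⟨by simp, by simp⟩
            have hwn1 : ((w1.1, w1.2 - 1) : Node) ∉ ξ1 := by
              intro hmem
              have := hthin1 _ hmem w1' hw1' (by rw [hw1'eq]; simp; try omega)
              rw [hw1'eq] at this; simp [Prod.ext_iff] at this; try omega
            have hwn2 : ((w1.1, w1.2 - 1) : Node) ∉ ξ2 := by
              intro hmem
              have := (hbound2 _ hmem).1; simp at this; omega
            exact hrem2.2 p2a hp2a _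
              (Finset.mem_sdiff.mpr ⟨Finset.mem_sdiff.mpr ⟨hwτ, hwn1⟩, hwn2⟩)
              ⟨by rw [hhug]; simp, by rw [hhug]; simp⟩
          · -- w1.1 = w1'.1 : w1' = (w1.1, w1.2 - 1); v0 ∉ ξ1 dominates w1'
            have hw1'eq : w1' = (w1.1, w1.2 - 1) := Prod.ext (by omega) (by omega)
            have hv0n1 : ((w1.1 + 1, w1.2) : Node) ∉ ξ1 := by
              intro hmem
              have := hthin1 _ hmem w1' hw1' (by rw [hw1'eq]; simp; try omega)
              rw [hw1'eq] at this; simp [Prod.ext_iff] at this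
            exact hrem1.2 w1' hw1' _ (Finset.mem_sdiff.mpr ⟨hv0, hv0n1⟩)
              (by rw [hw1'eq]; exact ⟨by simp, by simp⟩)
        · -- a2-1 ∉ D1
          have hv0n1 : ((w1.1 + 1, w1.2) : Node) ∉ ξ1 := by
            intro hmem
            have hh2 := hmem1D _ hmem
            have he2 : ((w1.1 + 1, w1.2) : Node).2 - ((w1.1 + 1, w1.2) : Node).1 = a2 - 1 := by
              simp; omega
            rw [he2] at hh2
            exact ha21D1 hh2
          exact hrem1.2 w1 hw1 _ (Finset.mem_sdiff.mpr ⟨hv0, hv0n1⟩) ⟨by simp, by simp⟩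
      · -- a2 ∉ D1
        have hmxa2 : mx τ a2 = p2a := by rw [← hp2ad]; exact hmx2 p2a hp2a (by rw [hp2ad]; exact ha2D1)
        rw [hmxa2] at hv0
        have ha2lt : a2 < a1 := by
          by_contra hle
          push_neg at hle
          exact ha2D1 ((hND1 a2).mpr ⟨hle, by omega⟩)
        have hv0n1 : ((p2a.1 + 1, p2a.2) : Node) ∉ ξ1 := by
          intro hmem
          have := (hbound1 _ hmem).1; simp at this; omega
        have hv0n2 : ((p2a.1 + 1, p2a.2) : Node) ∉ ξ2 := by
          intro hmem
          have := (hbound2 _ hmem).1; simp at this; omega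
        exact hrem2.2 p2a hp2a _
          (Finset.mem_sdiff.mpr ⟨Finset.mem_sdiff.mpr ⟨hv0, hv0n1⟩, hv0n2⟩)
          ⟨by simp, by simp⟩
    have hremρ := removable_of hτ ha2b2 hocc hT hB
    have hribρ := ribbon_of hτ ha2b2 hocc
    have hD2I : D2 = Finset.Icc a2 b2 := by
      ext d
      rw [Finset.mem_Icc, hND2]
    have hcont : cont e ((Finset.Icc a2 b2).image (mx τ)) = cont e ξ2 :=
      cont_eq_of_diag_image_eq hribρ.2.2.2 hthin2 (by rw [image_diag_mx hocc, ← hD2I]) e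
    have hres := hmin1 _ ⟨hribρ, hremρ⟩
    rwa [hcont] at hres
  · -- NON-OVERLAP CASE
    by_cases heasy : SERemovable τ ξ2
    · exact hmin1 ξ2 ⟨hrib2, heasy⟩
    have hex : ∃ u ∈ ξ2, ∃ v ∈ τ \ ξ2, SE u v := by
      by_contra hno
      push_neg at hno
      exact heasy ⟨hsub2τ, fun u hu v hv hse => hno u hu v hv hse⟩
    obtain ⟨u₂, hu₂, v₁, hv₁', hse21⟩ := hex
    have hv₁τ : v₁ ∈ τ := (Finset.mem_sdiff.mp hv₁').1
    have hv₁n2 : v₁ ∉ ξ2 := (Finset.mem_sdiff.mp hv₁').2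
    have hv₁1 : v₁ ∈ ξ1 := by
      by_contra hn
      exact hrem2.2 u₂ hu₂ v₁
        (Finset.mem_sdiff.mpr ⟨Finset.mem_sdiff.mpr ⟨hv₁τ, hn⟩, hv₁n2⟩) hse21
    have hdisj : ∀ d, d ∈ D1 → d ∉ D2 := fun d h h' => hov ⟨d, h, h'⟩
    set s := min a1 a2 with hsdef
    set t := max b1 b2 with htdef
    have hst : s ≤ t := by omega
    have hbu₂ := hbound2 u₂ hu₂
    have hbv₁ := hbound1 v₁ hv₁1
    have hcov : ∀ g, s ≤ g → g ≤ t → g ∈ D1 ∨ g ∈ D2 := by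
      intro g hg1 hg2
      by_contra hg
      push_neg at hg
      have hg1' : ¬(a1 ≤ g ∧ g ≤ b1) := fun h => hg.1 ((hND1 g).mpr h)
      have hg2' : ¬(a2 ≤ g ∧ g ≤ b2) := fun h => hg.2 ((hND2 g).mpr h)
      have hb : min (u₂.2 - u₂.1) (v₁.2 - v₁.1) ≤ g ∧
          g ≤ max (u₂.2 - u₂.1) (v₁.2 - v₁.1) := by omega
      obtain ⟨w, hwτ, hwd, hsew1, hsew2⟩ :=
        occ_between (g := g) hτ (hsub2τ hu₂) hv₁τ hse21 hb.1 hb.2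
      by_cases hw1 : w ∈ ξ1
      · exact hg.1 (hwd ▸ hmem1D w hw1)
      · have hw2 : w ∈ ξ2 := by
          by_contra hw2n
          exact hrem2.2 u₂ hu₂ w
            (Finset.mem_sdiff.mpr ⟨Finset.mem_sdiff.mpr ⟨hwτ, hw1⟩, hw2n⟩) hsew1
        exact hg.2 (hwd ▸ hmem2D w hw2)
    have hocc : ∀ g, s ≤ g → g ≤ t → ∃ u ∈ τ, u.2 - u.1 = g := by
      intro g hg1 hg2
      rcases hcov g hg1 hg2 with h | h
      · obtain ⟨w, hw, hwd⟩ := hmemD1 g h; exact ⟨w, hrem1.1 hw, hwd⟩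
      · obtain ⟨w, hw, hwd⟩ := hmemD2 g h; exact ⟨w, hsub2τ hw, hwd⟩
    have hsplit : b1 < a2 ∨ b2 < a1 := by
      by_contra hq
      push_neg at hq
      exact hdisj (max a1 a2) ((hND1 _).mpr ⟨by omega, by omega⟩)
        ((hND2 _).mpr ⟨by omega, by omega⟩)
    have hT : ((mx τ t).1, (mx τ t).2 + 1) ∉ τ := by
      intro hv0
      rcases hsplit with hc | hc
      · have htb2 : t = b2 := by omega
        have hb2nD1 : b2 ∉ D1 := fun h => by have := (hND1 b2).mp h; omega
        have hmxt : mx τ t = p2b := by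
          rw [htb2, ← hp2bd]; exact hmx2 p2b hp2b (by rw [hp2bd]; exact hb2nD1)
        rw [hmxt] at hv0
        have hv0n1 : ((p2b.1, p2b.2 + 1) : Node) ∉ ξ1 := by
          intro hmem
          have := (hbound1 _ hmem).2; simp at this; omega
        have hv0n2 : ((p2b.1, p2b.2 + 1) : Node) ∉ ξ2 := by
          intro hmem
          have := (hbound2 _ hmem).2; simp at this; omega
        exact hrem2.2 p2b hp2b _
          (Finset.mem_sdiff.mpr ⟨Finset.mem_sdiff.mpr ⟨hv0, hv0n1⟩, hv0n2⟩)
          ⟨by simp, by simp⟩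
      · have htb1 : t = b1 := by omega
        have hmxt : mx τ t = p1b := by rw [htb1, ← hp1bd]; exact hmx1 p1b hp1b
        rw [hmxt] at hv0
        have hv0n1 : ((p1b.1, p1b.2 + 1) : Node) ∉ ξ1 := by
          intro hmem
          have := (hbound1 _ hmem).2; simp at this; omega
        exact hrem1.2 p1b hp1b _ (Finset.mem_sdiff.mpr ⟨hv0, hv0n1⟩) ⟨by simp, by simp⟩
    have hB : ((mx τ s).1 + 1, (mx τ s).2) ∉ τ := by
      intro hv0
      rcases hsplit with hc | hc
      · have hsa1 : s = a1 := by omega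
        have hmxs : mx τ s = p1a := by rw [hsa1, ← hp1ad]; exact hmx1 p1a hp1a
        rw [hmxs] at hv0
        have hv0n1 : ((p1a.1 + 1, p1a.2) : Node) ∉ ξ1 := by
          intro hmem
          have := (hbound1 _ hmem).1; simp at this; omega
        exact hrem1.2 p1a hp1a _ (Finset.mem_sdiff.mpr ⟨hv0, hv0n1⟩) ⟨by simp, by simp⟩
      · have hsa2 : s = a2 := by omega
        have ha2nD1 : a2 ∉ D1 := fun h => by have := (hND1 a2).mp h; omega
        have hmxs : mx τ s = p2a := by
          rw [hsa2, ← hp2ad]; exact hmx2 p2a hp2a (by rw [hp2ad]; exact ha2nD1)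
        rw [hmxs] at hv0
        have hv0n1 : ((p2a.1 + 1, p2a.2) : Node) ∉ ξ1 := by
          intro hmem
          have := (hbound1 _ hmem).1; simp at this; omega
        have hv0n2 : ((p2a.1 + 1, p2a.2) : Node) ∉ ξ2 := by
          intro hmem
          have := (hbound2 _ hmem).1; simp at this; omega
        exact hrem2.2 p2a hp2a _
          (Finset.mem_sdiff.mpr ⟨Finset.mem_sdiff.mpr ⟨hv0, hv0n1⟩, hv0n2⟩)
          ⟨by simp, by simp⟩
    have hremν := removable_of hτ hst hocc hT hB
    have hribν := ribbon_of hτ hst hocc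
    have hIcc : Finset.Icc s t = D1 ∪ D2 := by
      ext g
      rw [Finset.mem_Icc, Finset.mem_union]
      constructor
      · intro h; exact hcov g h.1 h.2
      · intro h
        rcases h with h | h
        · have := (hND1 g).mp h; omega
        · have := (hND2 g).mp h; omega
    have hdisjf : Disjoint D1 D2 := Finset.disjoint_left.mpr (fun {a} ha ha' => hdisj a ha ha')
    have hcontν : cont e ((Finset.Icc s t).image (mx τ)) = cont e ξ1 + cont e ξ2 := by
      funext i
      rw [Pi.add_apply, cont_apply_eq_card_diag hribν.2.2.2 e i,
        cont_apply_eq_card_diag hthin1 e i, cont_apply_eq_card_diag hthin2 e i,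
        image_diag_mx hocc, hIcc, Finset.filter_union,
        Finset.card_union_of_disjoint
          (hdisjf.mono (Finset.filter_subset _ _) (Finset.filter_subset _ _))]
      rw [← hD1def, ← hD2def]
      push_cast
      ring
    have p1 : IsPosRoot e (cont e ξ1) :=
      isPosRoot_of_interval hthin1 ha1b1
        (by rw [← hD1def]; ext g; rw [Finset.mem_Icc]; exact hND1 g) e
    have p2 : IsPosRoot e (cont e ξ2) :=
      isPosRoot_of_interval hthin2 ha2b2
        (by rw [← hD2def]; ext g; rw [Finset.mem_Icc]; exact hND2 g) e
    have pν : IsPosRoot e (cont e ((Finset.Icc s t).image (mx τ))) :=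
      isPosRoot_of_interval hribν.2.2.2 hst (image_diag_mx hocc) e
    have hνmin : R (cont e ξ1 + cont e ξ2) (cont e ξ1) := by
      have hres := hmin1 _ ⟨hribν, hremν⟩
      rwa [hcontν] at hres
    have hsumroot : IsPosRoot e (cont e ξ1 + cont e ξ2) := by rwa [hcontν] at pν
    obtain ⟨hrefl, htrans, htot, hconv, hequiv⟩ := hR
    rcases htot (cont e ξ1) (cont e ξ2) p1 p2 with h12 | h21
    swap
    · exact h21
    obtain ⟨hA, hBB⟩ := hconv _ _ p1 p2 h12 hsumroot
    have hiff := (hequiv (cont e ξ1) _ p1 hsumroot).mp ⟨hA, hνmin⟩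
    have hpos2 : 1 ≤ cont e ξ2 (res e u₂) := by
      rw [cont]
      have hmem : u₂ ∈ ξ2.filter (fun u => res e u = res e u₂) :=
        Finset.mem_filter.mpr ⟨hu₂, rfl⟩
      have hcard := Finset.card_pos.mpr ⟨u₂, hmem⟩
      omega
    rcases hiff with heq | ⟨him1, hims⟩
    · exfalso
      have hfun := congrFun heq (res e u₂)
      rw [Pi.add_apply] at hfun
      omega
    · obtain ⟨m, hm1, hmeq⟩ := him1
      obtain ⟨n, hn1, hneq⟩ := hims
      have h3 := congrFun hmeq (res e u₂)
      have h4 := congrFun hneq (res e u₂)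
      rw [Pi.add_apply] at h4
      have him2 : IsImag e (cont e ξ2) := by
        refine ⟨n - m, by omega, ?_⟩
        funext i
        have h5 := congrFun hmeq i
        have h6 := congrFun hneq i
        rw [Pi.add_apply] at h6
        omega
      exact ((hequiv (cont e ξ2) (cont e ξ1) p2 p1).mpr
        (Or.inr ⟨him2, ⟨m, hm1, hmeq⟩⟩)).1
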